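/- In the degree-corrected stochastic block model setup with λ_w, λ_f > 0, for every x = (x_j) ∈ ℝ^p one has x^⊤ 𝔏_{f,λ} x ≥ λ_f Σ_j x_j² / (θ_j C(·,ℓ_j) + λ_f) ≥ ‖x‖² · λ_f / (max_j θ_j C(·,ℓ_j) + λ_f). -/

import Mathlib

open Matrix BigOperators

/-- in the DCSBM with `λ_w, λ_f > 0`, for every `x ∈ ℝ^p`,
`x^⊤ 𝔏_{f,λ} x ≥ λ_f Σ_j x_j²/(θ_j C(·,ℓ_j)+λ_f) ≥ ‖x‖² λ_f/(max_j θ_j C(·,ℓ_j)+λ_f)`. -/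
theorem stmt_8 (n p K : ℕ) (hn : 0 < n) (hp : 0 < p) (hK : 0 < K)
    (kw : Fin n → Fin K) (ll : Fin p → Fin K)
    (nsize : Fin K → ℕ)
    (hnsize : ∀ a, nsize a = (Finset.univ.filter (fun i => kw i = a)).card)
    (hnpos : ∀ a, 0 < nsize a)
    (θ : Fin p → ℝ) (hθ : ∀ j, 0 < θ j)
    (hθsum : ∀ a, ∑ j ∈ Finset.univ.filter (fun j => ll j = a), θ j = 1)
    (C : Matrix (Fin K) (Fin K) ℝ) (hC : ∀ a b, 0 ≤ C a b)
    (Crow : Fin K → ℝ) (hCrow : ∀ a, Crow a = ∑ b, C a b)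
    (Ccol : Fin K → ℝ) (hCcol : ∀ b, Ccol b = ∑ a, C a b)
    (Bb : Matrix (Fin n) (Fin p) ℝ)
    (hBb : ∀ i j, Bb i j = θ j * C (kw i) (ll j) / (nsize (kw i) : ℝ))
    (lamw lamf : ℝ) (hlamw : 0 < lamw) (hlamf : 0 < lamf)
    (Ee : Matrix (Fin n) (Fin p) ℝ)
    (hEe : Ee = Matrix.diagonal
        (fun i => 1 / Real.sqrt (Crow (kw i) / (nsize (kw i) : ℝ) + lamw)) * Bb *
      Matrix.diagonal (fun j => 1 / Real.sqrt (θ j * Ccol (ll j) + lamf)))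
    (Lfl : Matrix (Fin p) (Fin p) ℝ) (hLfl : Lfl = 1 - Eeᵀ * Ee)
    (maxd : ℝ)
    (hmaxd : maxd = Finset.univ.sup' ⟨⟨0, hp⟩, Finset.mem_univ _⟩
      (fun j => θ j * Ccol (ll j))) :
    ∀ x : Fin p → ℝ,
      lamf * ∑ j, x j ^ 2 / (θ j * Ccol (ll j) + lamf) ≤ x ⬝ᵥ Lfl.mulVec x ∧
      (∑ j, x j ^ 2) * lamf / (maxd + lamf) ≤
        lamf * ∑ j, x j ^ 2 / (θ j * Ccol (ll j) + lamf) := by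

  intro x
  have hCcolnn : ∀ b, 0 ≤ Ccol b := fun b => by
    rw [hCcol]; exact Finset.sum_nonneg fun a _ => hC a b
  have hCrownn : ∀ a, 0 ≤ Crow a := fun a => by
    rw [hCrow]; exact Finset.sum_nonneg fun b _ => hC a b
  have hdnn : ∀ j, 0 ≤ θ j * Ccol (ll j) := fun j => mul_nonneg (hθ j).le (hCcolnn _)
  have hdlf : ∀ j, 0 < θ j * Ccol (ll j) + lamf := fun j =>
    add_pos_of_nonneg_of_pos (hdnn j) hlamf
  have hwpos : ∀ i : Fin n, 0 < Crow (kw i) / (nsize (kw i) : ℝ) + lamw := fun i =>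
    add_pos_of_nonneg_of_pos (div_nonneg (hCrownn _) (Nat.cast_nonneg _)) hlamw
  have hBnn : ∀ i j, 0 ≤ Bb i j := fun i j => by
    rw [hBb]; exact div_nonneg (mul_nonneg (hθ j).le (hC _ _)) (Nat.cast_nonneg _)
  set y : Fin p → ℝ := fun j => x j / Real.sqrt (θ j * Ccol (ll j) + lamf) with hy
  have hy2 : ∀ j, y j ^ 2 = x j ^ 2 / (θ j * Ccol (ll j) + lamf) := fun j => by
    rw [hy]; rw [div_pow, Real.sq_sqrt (hdlf j).le]
  -- row sums of Bb
  have hrow : ∀ i, ∑ j, Bb i j = Crow (kw i) / (nsize (kw i) : ℝ) := by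
    intro i
    simp only [hBb]
    rw [← Finset.sum_div, hCrow]
    congr 1
    rw [← Finset.sum_fiberwise Finset.univ ll (fun j => θ j * C (kw i) (ll j))]
    refine Finset.sum_congr rfl fun b _ => ?_
    rw [← one_mul (C (kw i) b), ← hθsum b, Finset.sum_mul]
    refine Finset.sum_congr rfl fun j hj => ?_
    rw [(Finset.mem_filter.mp hj).2]
  -- column sums of Bb
  have hcol : ∀ j, ∑ i, Bb i j = θ j * Ccol (ll j) := by
    intro j
    simp only [hBb]
    rw [← Finset.sum_fiberwise Finset.univ kw
      (fun i => θ j * C (kw i) (ll j) / (nsize (kw i) : ℝ))]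
    rw [hCcol, Finset.mul_sum]
    refine Finset.sum_congr rfl fun a _ => ?_
    have hcard : ∀ i ∈ Finset.univ.filter (fun i => kw i = a),
        θ j * C (kw i) (ll j) / (nsize (kw i) : ℝ) = θ j * C a (ll j) / (nsize a : ℝ) := by
      intro i hi; rw [(Finset.mem_filter.mp hi).2]
    rw [Finset.sum_congr rfl hcard, Finset.sum_const, ← hnsize a, nsmul_eq_mul]
    have hne : ((nsize a : ℝ)) ≠ 0 := Nat.cast_ne_zero.mpr (hnpos a).ne'
    field_simp
  -- entries of Ee.mulVec x
  have hEi : ∀ i, Ee.mulVec x i =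
      (1 / Real.sqrt (Crow (kw i) / (nsize (kw i) : ℝ) + lamw)) * ∑ j, Bb i j * y j := by
    intro i
    rw [hEe]
    simp only [Matrix.mulVec, dotProduct, Matrix.mul_diagonal, Matrix.diagonal_mul,
      Finset.mul_sum, hy]
    refine Finset.sum_congr rfl fun j _ => ?_
    ring
  -- per-row Cauchy-Schwarz bound
  have hsq : ∀ i, (Ee.mulVec x i) ^ 2 ≤ ∑ j, Bb i j * y j ^ 2 := by
    intro i
    set w := Crow (kw i) / (nsize (kw i) : ℝ) + lamw with hwdef
    have hw := hwpos i
    have hcs : (∑ j, Bb i j * y j) ^ 2 ≤ (∑ j, Bb i j) * ∑ j, Bb i j * y j ^ 2 := by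
      have h := Finset.sum_mul_sq_le_sq_mul_sq Finset.univ
        (fun j => Real.sqrt (Bb i j)) (fun j => Real.sqrt (Bb i j) * y j)
      have e1 : ∀ j : Fin p, Real.sqrt (Bb i j) * (Real.sqrt (Bb i j) * y j) = Bb i j * y j :=
        fun j => by rw [← mul_assoc, Real.mul_self_sqrt (hBnn i j)]
      have e2 : ∀ j : Fin p, Real.sqrt (Bb i j) ^ 2 = Bb i j :=
        fun j => Real.sq_sqrt (hBnn i j)
      have e3 : ∀ j : Fin p, (Real.sqrt (Bb i j) * y j) ^ 2 = Bb i j * y j ^ 2 :=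
        fun j => by rw [mul_pow, Real.sq_sqrt (hBnn i j)]
      calc (∑ j, Bb i j * y j) ^ 2
          = (∑ j, Real.sqrt (Bb i j) * (Real.sqrt (Bb i j) * y j)) ^ 2 := by
            rw [Finset.sum_congr rfl fun j _ => (e1 j).symm]
        _ ≤ (∑ j, Real.sqrt (Bb i j) ^ 2) * ∑ j, (Real.sqrt (Bb i j) * y j) ^ 2 := h
        _ = (∑ j, Bb i j) * ∑ j, Bb i j * y j ^ 2 := by
            rw [Finset.sum_congr rfl fun j _ => e2 j, Finset.sum_congr rfl fun j _ => e3 j]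
    have hSnn : 0 ≤ ∑ j, Bb i j * y j ^ 2 :=
      Finset.sum_nonneg fun j _ => mul_nonneg (hBnn i j) (sq_nonneg _)
    calc (Ee.mulVec x i) ^ 2
        = (1 / w) * (∑ j, Bb i j * y j) ^ 2 := by
          rw [hEi i, mul_pow, div_pow, one_pow, Real.sq_sqrt hw.le]
      _ ≤ (1 / w) * ((∑ j, Bb i j) * ∑ j, Bb i j * y j ^ 2) := by
          exact mul_le_mul_of_nonneg_left hcs (by positivity)
      _ = ((∑ j, Bb i j) / w) * ∑ j, Bb i j * y j ^ 2 := by ring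
      _ ≤ 1 * ∑ j, Bb i j * y j ^ 2 := by
          refine mul_le_mul_of_nonneg_right ?_ hSnn
          rw [div_le_one hw, hrow i]
          linarith
      _ = ∑ j, Bb i j * y j ^ 2 := one_mul _
  -- total bound on the squared norm of Ee x
  have hsum : ∑ i, (Ee.mulVec x i) ^ 2 ≤ ∑ j, (θ j * Ccol (ll j)) * y j ^ 2 := by
    calc ∑ i, (Ee.mulVec x i) ^ 2
        ≤ ∑ i, ∑ j, Bb i j * y j ^ 2 := Finset.sum_le_sum fun i _ => hsq i
      _ = ∑ j, ∑ i, Bb i j * y j ^ 2 := Finset.sum_comm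
      _ = ∑ j, (∑ i, Bb i j) * y j ^ 2 := by
          refine Finset.sum_congr rfl fun j _ => ?_; rw [Finset.sum_mul]
      _ = ∑ j, (θ j * Ccol (ll j)) * y j ^ 2 := by
          refine Finset.sum_congr rfl fun j _ => ?_; rw [hcol j]
  -- quadratic form expression
  have hq : x ⬝ᵥ Lfl.mulVec x = (∑ j, x j ^ 2) - ∑ i, (Ee.mulVec x i) ^ 2 := by
    rw [hLfl, Matrix.sub_mulVec, Matrix.one_mulVec, dotProduct_sub,
      ← Matrix.mulVec_mulVec, Matrix.dotProduct_mulVec, Matrix.vecMul_transpose]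
    congr 1
    · simp [dotProduct, sq]
    · simp [dotProduct, sq]
  constructor
  · rw [hq]
    have key : ∑ j, (θ j * Ccol (ll j)) * y j ^ 2
        = (∑ j, x j ^ 2) - lamf * ∑ j, x j ^ 2 / (θ j * Ccol (ll j) + lamf) := by
      rw [Finset.mul_sum, ← Finset.sum_sub_distrib]
      refine Finset.sum_congr rfl fun j _ => ?_
      rw [hy2 j]
      have hne := (hdlf j).ne'
      field_simp
      ring
    linarith [hsum, key ▸ hsum]
  · have hmge : ∀ j : Fin p, θ j * Ccol (ll j) ≤ maxd := fun j => by
      rw [hmaxd]; exact Finset.le_sup' (fun j => θ j * Ccol (ll j)) (Finset.mem_univ j)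
    have hmpos : 0 < maxd + lamf :=
      add_pos_of_nonneg_of_pos (le_trans (hdnn ⟨0, hp⟩) (hmge ⟨0, hp⟩)) hlamf
    have hterm : ∀ j : Fin p, x j ^ 2 / (maxd + lamf) ≤ x j ^ 2 / (θ j * Ccol (ll j) + lamf) :=
      fun j => div_le_div_of_nonneg_left (sq_nonneg _) (hdlf j) (by linarith [hmge j])
    calc (∑ j, x j ^ 2) * lamf / (maxd + lamf)
        = lamf * ∑ j, x j ^ 2 / (maxd + lamf) := by rw [← Finset.sum_div]; ring
      _ ≤ lamf * ∑ j, x j ^ 2 / (θ j * Ccol (ll j) + lamf) :=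
          mul_le_mul_of_nonneg_left (Finset.sum_le_sum fun j _ => hterm j) hlamf.le
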